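/- arXiv:1305.6626 — 5 statements merged into one kernel-verified Lean document; each statement's English description precedes it below -/
import Mathlib

section
/- Let α be a finite type, let Ω be a finite probability space with probability mass function P, let X : Ω → α be a random variable, let 0 ≤ δ and 2δ ≤ ε ≤ 1, and let T ⊆ Ω be an event with P(T) ≥ 1 − δ > 0. Let p be the distribution of X under P and let p_T be the distribution of X under P conditioned on T (i.e. p_T(a) = P({ω ∈ T : X ω = a})/P(T)). Then H∞^{ε−2δ}(p_T) ≤ H∞^{ε}(p). -/
open Finset

/-- `p` is a probability distribution on the finite type `α`. -/
def IsDist {α : Type*} [Fintype α] (p : α → ℝ) : Prop :=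
  (∀ a, 0 ≤ p a) ∧ ∑ a, p a = 1

/-- Statistical (total variation) distance between two distributions. -/
noncomputable def statDist {α : Type*} [Fintype α] (p q : α → ℝ) : ℝ :=
  (∑ a, |p a - q a|) / 2

/-- Min-entropy `H∞(p) = -log₂ (max_a p a)`. -/
noncomputable def minEntropy {α : Type*} [Fintype α] (p : α → ℝ) : ℝ :=
  - Real.logb 2 (⨆ a, p a)

/-- `ε`-smooth min-entropy: supremum of `H∞(q)` over distributions `q`
within statistical distance `ε` of `p`. -/
noncomputable def smoothMinEntropy {α : Type*} [Fintype α] (ε : ℝ) (p : α → ℝ) : ℝ :=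
  sSup {h : ℝ | ∃ q : α → ℝ, IsDist q ∧ statDist q p ≤ ε ∧ h = minEntropy q}

lemma minEntropy_le_log_card {α : Type*} [Fintype α] (q : α → ℝ) (hq : IsDist q) :
    minEntropy q ≤ Real.logb 2 (Fintype.card α) := by
  have hne : Nonempty α := by
    by_contra h
    rw [not_nonempty_iff] at h
    have : (∑ a, q a) = 0 := by simp
    rw [hq.2] at this; norm_num at this
  have hcard : (0:ℝ) < Fintype.card α := by
    exact_mod_cast Fintype.card_pos
  obtain ⟨a0, -, ha0⟩ : ∃ a ∈ Finset.univ, (1 / Fintype.card α : ℝ) ≤ q a := by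
    apply Finset.exists_le_of_sum_le Finset.univ_nonempty
    rw [hq.2, Finset.sum_const, nsmul_eq_mul]
    rw [Finset.card_univ]
    field_simp
    exact le_rfl
  have hM : (1 / Fintype.card α : ℝ) ≤ ⨆ a, q a :=
    le_trans ha0 (le_ciSup (Set.Finite.bddAbove (Set.finite_range q)) a0)
  have hpos : (0:ℝ) < 1 / Fintype.card α := by positivity
  unfold minEntropy
  calc - Real.logb 2 (⨆ a, q a) ≤ - Real.logb 2 (1 / Fintype.card α) := by
        apply neg_le_neg
        exact Real.logb_le_logb_of_le (by norm_num) hpos hM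
    _ = Real.logb 2 (Fintype.card α) := by
        rw [one_div, Real.logb_inv, neg_neg]

lemma statDist_triangle {α : Type*} [Fintype α] (p q r : α → ℝ) :
    statDist p r ≤ statDist p q + statDist q r := by
  unfold statDist
  rw [← add_div, div_le_div_iff_of_pos_right (by norm_num : (0:ℝ) < 2)]
  rw [← Finset.sum_add_distrib]
  apply Finset.sum_le_sum
  intro a _
  calc |p a - r a| = |(p a - q a) + (q a - r a)| := by ring_nf
    _ ≤ |p a - q a| + |q a - r a| := abs_add_le _ _

/-- Conditioning on an event `T` of probability at least `1 - δ` decreases the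
`(ε - 2δ)`-smooth min-entropy of the conditioned distribution below the
`ε`-smooth min-entropy of the original distribution. -/
theorem smoothMinEntropy_cond_le
    {Ω α : Type*} [Fintype Ω] [Fintype α] [DecidableEq α]
    (P : Ω → ℝ) (hP : (∀ ω, 0 ≤ P ω) ∧ ∑ ω, P ω = 1)
    (X : Ω → α) (T : Finset Ω) (δ ε : ℝ)
    (hδ : 0 ≤ δ) (hεδ : 2 * δ ≤ ε) (hε : ε ≤ 1)
    (hT : 1 - δ ≤ ∑ ω ∈ T, P ω) (hδ1 : 0 < 1 - δ) :
    smoothMinEntropy (ε - 2 * δ)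
        (fun a => (∑ ω ∈ T.filter (fun ω => X ω = a), P ω) / ∑ ω ∈ T, P ω)
      ≤ smoothMinEntropy ε
        (fun a => ∑ ω ∈ Finset.univ.filter (fun ω => X ω = a), P ω) := by
  classical
  set s : ℝ := ∑ ω ∈ T, P ω with hs
  have hs0 : 0 < s := lt_of_lt_of_le hδ1 hT
  have hs1 : s ≤ 1 := by
    rw [← hP.2]
    exact Finset.sum_le_sum_of_subset_of_nonneg (Finset.subset_univ T)
      (fun ω _ _ => hP.1 ω)
  set u : α → ℝ := fun a => ∑ ω ∈ T.filter (fun ω => X ω = a), P ω with hu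
  set v : α → ℝ := fun a => ∑ ω ∈ Tᶜ.filter (fun ω => X ω = a), P ω with hv
  set pT : α → ℝ := fun a => u a / s with hpT
  set p : α → ℝ := fun a => ∑ ω ∈ Finset.univ.filter (fun ω => X ω = a), P ω with hp
  have hu0 : ∀ a, 0 ≤ u a := fun a => Finset.sum_nonneg fun ω _ => hP.1 ω
  have hv0 : ∀ a, 0 ≤ v a := fun a => Finset.sum_nonneg fun ω _ => hP.1 ω
  have husum : ∑ a, u a = s := Finset.sum_fiberwise T X P
  have hsplit : ∀ a, p a = u a + v a := by
    intro a
    have : (Finset.univ.filter fun ω => X ω = a)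
        = (T.filter fun ω => X ω = a) ∪ (Tᶜ.filter fun ω => X ω = a) := by
      rw [← Finset.filter_union, Finset.union_compl]
    rw [hp]
    simp only
    rw [this, Finset.sum_union (Finset.disjoint_filter_filter disjoint_compl_right)]
  have hpsum : ∑ a, p a = 1 := by
    simp only [hp]
    rw [Finset.sum_fiberwise Finset.univ X P, hP.2]
  have hvsum : ∑ a, v a = 1 - s := by
    have : ∑ a, p a = ∑ a, u a + ∑ a, v a := by
      rw [← Finset.sum_add_distrib]; exact Finset.sum_congr rfl fun a _ => hsplit a
    rw [hpsum, husum] at this; linarith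
  -- pT is a distribution
  have hpTdist : IsDist pT := by
    constructor
    · intro a; exact div_nonneg (hu0 a) hs0.le
    · rw [hpT]; simp only
      rw [← Finset.sum_div, husum, div_self hs0.ne']
  -- statDist pT p ≤ δ
  have hdist : statDist pT p ≤ δ := by
    unfold statDist
    rw [div_le_iff₀ (by norm_num : (0:ℝ) < 2)]
    have hbound : ∀ a, |pT a - p a| ≤ u a * ((1 - s) / s) + v a := by
      intro a
      have : pT a - p a = u a * ((1 - s) / s) - v a := by
        rw [hsplit a, hpT]
        field_simp
        ring
      rw [this]
      calc |u a * ((1 - s) / s) - v a| ≤ |u a * ((1 - s) / s)| + |v a| := abs_sub _ _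
        _ = u a * ((1 - s) / s) + v a := by
            rw [abs_of_nonneg (mul_nonneg (hu0 a) (div_nonneg (by linarith) hs0.le)),
              abs_of_nonneg (hv0 a)]
    calc ∑ a, |pT a - p a| ≤ ∑ a, (u a * ((1 - s) / s) + v a) :=
          Finset.sum_le_sum fun a _ => hbound a
      _ = s * ((1 - s) / s) + (1 - s) := by
          rw [Finset.sum_add_distrib, ← Finset.sum_mul, husum, hvsum]
      _ = 2 * (1 - s) := by field_simp; ring
      _ ≤ δ * 2 := by nlinarith
  -- main argument
  apply csSup_le_csSup
  · -- BddAbove of the right set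
    refine ⟨Real.logb 2 (Fintype.card α), ?_⟩
    rintro h ⟨q, hq, -, rfl⟩
    exact minEntropy_le_log_card q hq
  · -- left set nonempty
    exact ⟨minEntropy pT, pT, hpTdist, by
      unfold statDist; simp; linarith, rfl⟩
  · -- subset
    rintro h ⟨q, hq, hqd, rfl⟩
    refine ⟨q, hq, ?_, rfl⟩
    calc statDist q p ≤ statDist q pT + statDist pT p := statDist_triangle q pT p
      _ ≤ (ε - 2 * δ) + δ := add_le_add hqd hdist
      _ ≤ ε := by linarith
end

section
/- Let α be a finite type, p a probability distribution on α, and ε ∈ [0,1). Then H∞^ε(p) ≤ H₀(p) − log₂(1 − ε). Equivalently, every probability distribution q on α with statistical distance ‖q − p‖ ≤ ε satisfies H∞(q) ≤ log₂(card {a : p a ≠ 0}) − log₂(1 − ε). -/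
open Finset
open scoped Classical

/-- Max-entropy `H₀(p) = log₂ |supp p|`. -/
noncomputable def maxEntropy {α : Type*} [Fintype α] (p : α → ℝ) : ℝ :=
  Real.logb 2 ((Finset.univ.filter fun a => p a ≠ 0).card)

lemma key_bound {α : Type*} [Fintype α] (p : α → ℝ) (hp : IsDist p)
    (ε : ℝ) (hε0 : 0 ≤ ε) (hε1 : ε < 1)
    (q : α → ℝ) (hq : IsDist q) (hd : statDist q p ≤ ε) :
    minEntropy q ≤ Real.logb 2 ((Finset.univ.filter fun a => p a ≠ 0).card)
      - Real.logb 2 (1 - ε) := by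
  set S := Finset.univ.filter fun a => p a ≠ 0 with hS
  have hpS : ∑ a ∈ S, p a = 1 := by
    rw [hS, Finset.sum_filter_ne_zero, hp.2]
  have hsum : ∑ a ∈ S, q a + ∑ a ∈ Sᶜ, q a = 1 := by
    rw [Finset.sum_add_sum_compl, hq.2]
  have hcompl : ∑ a ∈ Sᶜ, q a = ∑ a ∈ Sᶜ, |q a - p a| := by
    apply Finset.sum_congr rfl
    intro a ha
    have hpa : p a = 0 := by
      simp only [hS, Finset.mem_compl, Finset.mem_filter, Finset.mem_univ, true_and,
        not_not] at ha
      exact ha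
    rw [hpa, sub_zero, abs_of_nonneg (hq.1 a)]
  have h4 : ∑ a ∈ Sᶜ, q a = ∑ a ∈ S, (p a - q a) := by
    rw [Finset.sum_sub_distrib, hpS]
    linarith
  have h5 : ∑ a ∈ S, (p a - q a) ≤ ∑ a ∈ S, |q a - p a| := by
    apply Finset.sum_le_sum
    intro a _
    rw [abs_sub_comm]
    exact le_abs_self _
  have htot : ∑ a ∈ S, |q a - p a| + ∑ a ∈ Sᶜ, |q a - p a| ≤ 2 * ε := by
    rw [Finset.sum_add_sum_compl]
    have : (∑ a, |q a - p a|) / 2 ≤ ε := hd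
    linarith
  have hqS : 1 - ε ≤ ∑ a ∈ S, q a := by linarith
  have hε' : 0 < 1 - ε := by linarith
  have hSne : S.Nonempty := by
    rcases S.eq_empty_or_nonempty with h | h
    · rw [h, Finset.sum_empty] at hqS; linarith
    · exact h
  have hcard : 0 < (S.card : ℝ) := by
    exact_mod_cast Finset.card_pos.mpr hSne
  obtain ⟨a₀, ha₀S, ha₀⟩ : ∃ a ∈ S, (∑ b ∈ S, q b) / S.card ≤ q a := by
    by_contra h
    push_neg at h
    have hlt : ∑ a ∈ S, q a < ∑ a ∈ S, ((∑ b ∈ S, q b) / S.card) :=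
      Finset.sum_lt_sum_of_nonempty hSne h
    rw [Finset.sum_const, nsmul_eq_mul, mul_div_cancel₀ _ (ne_of_gt hcard)] at hlt
    exact lt_irrefl _ hlt
  have hq0 : (1 - ε) / S.card ≤ q a₀ := le_trans (by gcongr) ha₀
  have hqpos : 0 < (1 - ε) / S.card := div_pos hε' hcard
  have hsup : (1 - ε) / S.card ≤ ⨆ a, q a :=
    le_trans hq0 (le_ciSup (Set.Finite.bddAbove (Set.finite_range q)) a₀)
  have hsuppos : 0 < ⨆ a, q a := lt_of_lt_of_le hqpos hsup
  have hlog : Real.logb 2 ((1 - ε) / S.card) ≤ Real.logb 2 (⨆ a, q a) :=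
    (Real.logb_le_logb one_lt_two hqpos hsuppos).mpr hsup
  have hdiv : Real.logb 2 ((1 - ε) / S.card)
      = Real.logb 2 (1 - ε) - Real.logb 2 (S.card : ℝ) :=
    Real.logb_div (ne_of_gt hε') (ne_of_gt hcard)
  rw [minEntropy]
  rw [hdiv] at hlog
  linarith

/-- The `ε`-smooth min-entropy is at most `H₀(p) - log₂(1 - ε)`; equivalently,
every distribution `q` within statistical distance `ε` of `p` has min-entropy at
most `log₂ |supp p| - log₂ (1 - ε)`. -/
theorem smoothMinEntropy_le_maxEntropy
    {α : Type*} [Fintype α] (p : α → ℝ) (hp : IsDist p)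
    (ε : ℝ) (hε0 : 0 ≤ ε) (hε1 : ε < 1) :
    smoothMinEntropy ε p ≤ maxEntropy p - Real.logb 2 (1 - ε) ∧
    ∀ q : α → ℝ, IsDist q → statDist q p ≤ ε →
      minEntropy q ≤ Real.logb 2 ((Finset.univ.filter fun a => p a ≠ 0).card)
        - Real.logb 2 (1 - ε) := by
  constructor
  · apply Real.sSup_le
    · rintro x ⟨q, hq, hd, rfl⟩
      exact key_bound p hp ε hε0 hε1 q hq hd
    · -- bound is nonnegative
      have hε' : 0 < 1 - ε := by linarith
      have h1 : Real.logb 2 (1 - ε) ≤ 0 :=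
        Real.logb_nonpos one_lt_two (le_of_lt hε') (by linarith)
      have hSne : (Finset.univ.filter fun a => p a ≠ 0).Nonempty := by
        by_contra h
        rw [Finset.not_nonempty_iff_eq_empty] at h
        have : ∑ a, p a = 0 := by
          rw [← Finset.sum_filter_ne_zero, h, Finset.sum_empty]
        rw [hp.2] at this
        linarith
      have hcard : (1 : ℝ) ≤ ((Finset.univ.filter fun a => p a ≠ 0).card : ℝ) := by
        exact_mod_cast Finset.card_pos.mpr hSne
      have h2 : 0 ≤ maxEntropy p := Real.logb_nonneg one_lt_two hcard
      linarith
  · exact fun q hq hd => key_bound p hp ε hε0 hε1 q hq hd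
end

section
/- Let α be a finite type with card α = n ≥ 1, let p be a probability distribution on α, let K ≥ 1 be a natural number, and let μ be the product probability measure on Fin K → α in which each coordinate is independently distributed according to p. For ω : Fin K → α define the empirical distribution q̂_ω(a) = (card {k ∈ Fin K : ω k = a})/K. Then for every η > 0, μ({ω : (1/2)·∑_{a} |q̂_ω a − p a| > η}) ≤ 2n·exp(−8η²K/n²). In particular, for K = Ω((n²/η²)·log(n/ξ)), with probability at least 1 − ξ the empirical distribution of K i.i.d. samples from p is within statistical distance η of p. -/
open Finset
open scoped Classical

noncomputable def Ffun (q x : ℝ) : ℝ := 1 - q + q * Real.exp x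
noncomputable def ufun (q x : ℝ) : ℝ := q * Real.exp x / Ffun q x
noncomputable def gfun (q x : ℝ) : ℝ := x ^ 2 / 8 - (Real.log (Ffun q x) - x * q)
noncomputable def hfun (q x : ℝ) : ℝ := x / 4 - ufun q x

lemma Ffun_pos {q : ℝ} (hq0 : 0 ≤ q) (hq1 : q ≤ 1) (x : ℝ) : 0 < Ffun q x := by
  have h := Real.exp_pos x
  have h2 : 0 ≤ q * Real.exp x := mul_nonneg hq0 h.le
  unfold Ffun
  nlinarith [mul_nonneg (sub_nonneg.2 hq1) h.le]

lemma hasDerivAt_F (q x : ℝ) : HasDerivAt (Ffun q) (q * Real.exp x) x := by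
  exact ((Real.hasDerivAt_exp x).const_mul q).const_add (1 - q)

lemma ufun_nonneg {q : ℝ} (hq0 : 0 ≤ q) (hq1 : q ≤ 1) (x : ℝ) : 0 ≤ ufun q x :=
  div_nonneg (mul_nonneg hq0 (Real.exp_pos x).le) (Ffun_pos hq0 hq1 x).le

lemma ufun_le_one {q : ℝ} (hq0 : 0 ≤ q) (hq1 : q ≤ 1) (x : ℝ) : ufun q x ≤ 1 := by
  rw [ufun, div_le_one (Ffun_pos hq0 hq1 x)]
  unfold Ffun; linarith

lemma hasDerivAt_u {q : ℝ} (hq0 : 0 ≤ q) (hq1 : q ≤ 1) (x : ℝ) :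
    HasDerivAt (ufun q) (ufun q x * (1 - ufun q x)) x := by
  have hF := Ffun_pos hq0 hq1 x
  have h := ((Real.hasDerivAt_exp x).const_mul q).div (hasDerivAt_F q x) hF.ne'
  refine h.congr_deriv ?_
  rw [ufun]
  field_simp

lemma hasDerivAt_h {q : ℝ} (hq0 : 0 ≤ q) (hq1 : q ≤ 1) (x : ℝ) :
    HasDerivAt (hfun q) (1 / 4 - ufun q x * (1 - ufun q x)) x := by
  exact ((hasDerivAt_id x).div_const 4).sub (hasDerivAt_u hq0 hq1 x)

lemma hfun_mono {q : ℝ} (hq0 : 0 ≤ q) (hq1 : q ≤ 1) : Monotone (hfun q) := by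
  apply monotone_of_deriv_nonneg
  · exact fun x => (hasDerivAt_h hq0 hq1 x).differentiableAt
  · intro x
    rw [(hasDerivAt_h hq0 hq1 x).deriv]
    nlinarith [sq_nonneg (ufun q x - 1 / 2), ufun_nonneg hq0 hq1 x, ufun_le_one hq0 hq1 x]

lemma ufun_zero (q : ℝ) : ufun q 0 = q := by simp [ufun, Ffun]

lemma hasDerivAt_g {q : ℝ} (hq0 : 0 ≤ q) (hq1 : q ≤ 1) (x : ℝ) :
    HasDerivAt (gfun q) (x / 4 - (ufun q x - q)) x := by
  have hF := Ffun_pos hq0 hq1 x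
  have hlog : HasDerivAt (fun y => Real.log (Ffun q y)) (q * Real.exp x / Ffun q x) x :=
    (hasDerivAt_F q x).log hF.ne'
  have hsq : HasDerivAt (fun y : ℝ => y ^ 2 / 8) (x / 4) x := by
    have := (hasDerivAt_pow 2 x).div_const 8
    refine this.congr_deriv ?_; ring
  have := hsq.sub (hlog.sub ((hasDerivAt_id x).mul_const q))
  refine this.congr_deriv ?_
  rw [show q * Real.exp x / Ffun q x = ufun q x from rfl]
  ring

lemma gfun_zero (q : ℝ) : gfun q 0 = 0 := by simp [gfun, Ffun]

lemma gfun_nonneg {q : ℝ} (hq0 : 0 ≤ q) (hq1 : q ≤ 1) (x : ℝ) : 0 ≤ gfun q x := by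
  have hdiff : ∀ y, HasDerivAt (gfun q) (y / 4 - (ufun q y - q)) y := hasDerivAt_g hq0 hq1
  have hcont : Continuous (gfun q) := by
    have : Differentiable ℝ (gfun q) := fun y => (hdiff y).differentiableAt
    exact this.continuous
  rcases le_total 0 x with hx | hx
  · have hmono : MonotoneOn (gfun q) (Set.Ici 0) := by
      apply monotoneOn_of_deriv_nonneg (convex_Ici 0) hcont.continuousOn
      · exact fun y _ => ((hdiff y).differentiableAt).differentiableWithinAt
      · intro y hy
        rw [(hdiff y).deriv]
        have hy0 : 0 ≤ y := le_of_lt (by simpa using hy)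
        have := hfun_mono hq0 hq1 hy0
        simp only [hfun, ufun_zero] at this
        linarith
    have := hmono (Set.mem_Ici.2 le_rfl) (Set.mem_Ici.2 hx) hx
    rwa [gfun_zero] at this
  · have hanti : AntitoneOn (gfun q) (Set.Iic 0) := by
      apply antitoneOn_of_deriv_nonpos (convex_Iic 0) hcont.continuousOn
      · exact fun y _ => ((hdiff y).differentiableAt).differentiableWithinAt
      · intro y hy
        rw [(hdiff y).deriv]
        have hy0 : y ≤ 0 := le_of_lt (by simpa using hy)
        have := hfun_mono hq0 hq1 hy0
        simp only [hfun, ufun_zero] at this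
        linarith
    have := hanti (Set.mem_Iic.2 hx) (Set.mem_Iic.2 le_rfl) hx
    rwa [gfun_zero] at this

/-- Hoeffding's lemma for a Bernoulli-type random variable. -/
lemma hoeffding_bernoulli {q : ℝ} (hq0 : 0 ≤ q) (hq1 : q ≤ 1) (l : ℝ) :
    1 - q + q * Real.exp l ≤ Real.exp (l ^ 2 / 8 + l * q) := by
  have h := gfun_nonneg hq0 hq1 l
  rw [gfun] at h
  have hF := Ffun_pos hq0 hq1 l
  have hlog : Real.log (Ffun q l) ≤ l ^ 2 / 8 + l * q := by linarith
  have := Real.exp_le_exp.2 hlog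
  rw [Real.exp_log hF] at this
  simpa [Ffun] using this

lemma chernoff {α : Type*} [Fintype α] (p X : α → ℝ) (hp0 : ∀ a, 0 ≤ p a)
    (hp1 : ∑ a, p a = 1) (hX : ∀ a, X a = 0 ∨ X a = 1) (K : ℕ) (t : ℝ) (ht : 0 < t) :
    ∑ ω ∈ Finset.univ.filter (fun ω : Fin K → α =>
        (K : ℝ) * ((∑ a, p a * X a) + t) ≤ ∑ k, X (ω k)),
      ∏ k, p (ω k) ≤ Real.exp (-2 * K * t ^ 2) := by
  set q := ∑ a, p a * X a with hq
  set l := 4 * t with hl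
  have hq0 : 0 ≤ q := Finset.sum_nonneg fun a _ => mul_nonneg (hp0 a)
    (by rcases hX a with h | h <;> simp [h])
  have hq1 : q ≤ 1 := by
    rw [← hp1]
    apply Finset.sum_le_sum
    intro a _
    rcases hX a with h | h <;> simp [h, hp0 a]
  have hwnn : ∀ ω : Fin K → α, 0 ≤ ∏ k, p (ω k) :=
    fun ω => Finset.prod_nonneg fun k _ => hp0 _
  have step1 : ∑ ω ∈ Finset.univ.filter (fun ω : Fin K → α =>
        (K : ℝ) * (q + t) ≤ ∑ k, X (ω k)), ∏ k, p (ω k)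
      ≤ ∑ ω : Fin K → α,
          Real.exp (l * ((∑ k, X (ω k)) - K * (q + t))) * ∏ k, p (ω k) := by
    have h1 : ∑ ω ∈ Finset.univ.filter (fun ω : Fin K → α =>
          (K : ℝ) * (q + t) ≤ ∑ k, X (ω k)), ∏ k, p (ω k)
        ≤ ∑ ω ∈ Finset.univ.filter (fun ω : Fin K → α =>
          (K : ℝ) * (q + t) ≤ ∑ k, X (ω k)),
            Real.exp (l * ((∑ k, X (ω k)) - K * (q + t))) * ∏ k, p (ω k) := by
      apply Finset.sum_le_sum
      intro ω hω
      rw [Finset.mem_filter] at hω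
      have h1 : (0:ℝ) ≤ l * ((∑ k, X (ω k)) - K * (q + t)) := by
        apply mul_nonneg (by positivity)
        linarith [hω.2]
      nlinarith [Real.one_le_exp h1, hwnn ω]
    refine h1.trans ?_
    apply Finset.sum_le_sum_of_subset_of_nonneg (Finset.filter_subset _ _)
    intro ω _ _
    exact mul_nonneg (Real.exp_pos _).le (hwnn ω)
  have step2 : ∑ ω : Fin K → α,
        Real.exp (l * ((∑ k, X (ω k)) - K * (q + t))) * ∏ k, p (ω k)
      = Real.exp (-(l * (K * (q + t)))) * (∑ a, p a * Real.exp (l * X a)) ^ K := by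
    rw [Fintype.sum_pow, Finset.mul_sum]
    apply Finset.sum_congr rfl
    intro ω _
    rw [show ∀ x y : ℝ, l * (x - y) = l * x + (- (l * y)) from fun x y => by ring,
      Real.exp_add, mul_sum, Real.exp_sum]
    rw [Finset.prod_mul_distrib]
    ring
  have hbase : ∑ a, p a * Real.exp (l * X a) = 1 - q + q * Real.exp l := by
    have : ∀ a, p a * Real.exp (l * X a) = p a + (Real.exp l - 1) * (p a * X a) := by
      intro a; rcases hX a with h | h <;> simp [h] <;> ring
    rw [Finset.sum_congr rfl fun a _ => this a, Finset.sum_add_distrib, hp1,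
      ← Finset.mul_sum, ← hq]
    ring
  have hbase_le : ∑ a, p a * Real.exp (l * X a) ≤ Real.exp (l ^ 2 / 8 + l * q) := by
    rw [hbase]; exact hoeffding_bernoulli hq0 hq1 l
  have hbase_nn : 0 ≤ ∑ a, p a * Real.exp (l * X a) :=
    Finset.sum_nonneg fun a _ => mul_nonneg (hp0 a) (Real.exp_pos _).le
  calc ∑ ω ∈ Finset.univ.filter (fun ω : Fin K → α =>
        (K : ℝ) * (q + t) ≤ ∑ k, X (ω k)), ∏ k, p (ω k)
      ≤ Real.exp (-(l * (K * (q + t)))) * (∑ a, p a * Real.exp (l * X a)) ^ K := by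
        rw [← step2]; exact step1
    _ ≤ Real.exp (-(l * (K * (q + t)))) * (Real.exp (l ^ 2 / 8 + l * q)) ^ K := by
        apply mul_le_mul_of_nonneg_left _ (Real.exp_pos _).le
        exact pow_le_pow_left₀ hbase_nn hbase_le K
    _ = Real.exp (-(l * (K * (q + t))) + K * (l ^ 2 / 8 + l * q)) := by
        rw [← Real.exp_nat_mul, ← Real.exp_add]
    _ = Real.exp (-2 * K * t ^ 2) := by
        congr 1; rw [hl]; ring

/-- Concentration of the empirical distribution of `K` i.i.d. samples from a
distribution `p` on a finite alphabet of size `n`: the probability (under the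
product measure, with mass function `ω ↦ ∏ k, p (ω k)`) that the empirical
distribution is at statistical distance more than `η` from `p` is at most
`2n·exp(−8η²K/n²)`. -/
theorem empirical_distribution_concentration
    {α : Type*} [Fintype α] [DecidableEq α] (n : ℕ) (hn : Fintype.card α = n)
    (hn1 : 1 ≤ n) (p : α → ℝ) (hp0 : ∀ a, 0 ≤ p a) (hp1 : ∑ a, p a = 1)
    (K : ℕ) (hK : 1 ≤ K) (η : ℝ) (hη : 0 < η) :
    ∑ ω ∈ Finset.univ.filter (fun ω : Fin K → α =>
        η < (1 / 2 : ℝ) * ∑ a : α,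
          |((Finset.univ.filter fun k : Fin K => ω k = a).card : ℝ) / K - p a|),
      ∏ k : Fin K, p (ω k)
    ≤ 2 * n * Real.exp (-(8 * η ^ 2 * K) / n ^ 2) := by
  have hnα : Nonempty α := Fintype.card_pos_iff.mp (by omega)
  have hnR : (0:ℝ) < n := by exact_mod_cast hn1
  have hKR : (0:ℝ) < K := by exact_mod_cast hK
  set t : ℝ := 2 * η / n with htdef
  have ht : 0 < t := by positivity
  set X : α → α → ℝ := fun a b => if b = a then 1 else 0 with hXdef
  set Y : α → α → ℝ := fun a b => if b = a then 0 else 1 with hYdef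
  have hX01 : ∀ a b, X a b = 0 ∨ X a b = 1 := by
    intro a b; by_cases h : b = a <;> simp [hXdef, h]
  have hY01 : ∀ a b, Y a b = 0 ∨ Y a b = 1 := by
    intro a b; by_cases h : b = a <;> simp [hYdef, h]
  have hqX : ∀ a, ∑ b, p b * X a b = p a := by
    intro a; simp [hXdef, mul_ite]
  have hqY : ∀ a, ∑ b, p b * Y a b = 1 - p a := by
    intro a
    have : ∀ b, p b * Y a b = p b - p b * X a b := by
      intro b; by_cases h : b = a <;> simp [hXdef, hYdef, h]
    rw [Finset.sum_congr rfl fun b _ => this b, Finset.sum_sub_distrib, hp1, hqX]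
  have hcX : ∀ (ω : Fin K → α) (a : α),
      ∑ k, X a (ω k) = ((Finset.univ.filter fun k : Fin K => ω k = a).card : ℝ) := by
    intro ω a
    rw [Finset.card_filter]
    push_cast
    apply Finset.sum_congr rfl
    intro k _
    by_cases h : ω k = a <;> simp [hXdef, h]
  have hcY : ∀ (ω : Fin K → α) (a : α),
      ∑ k, Y a (ω k) = K - ((Finset.univ.filter fun k : Fin K => ω k = a).card : ℝ) := by
    intro ω a
    rw [← hcX ω a]
    have : ∀ k, Y a (ω k) = 1 - X a (ω k) := by
      intro k; by_cases h : ω k = a <;> simp [hXdef, hYdef, h]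
    rw [Finset.sum_congr rfl fun k _ => this k, Finset.sum_sub_distrib]
    simp
  set w : (Fin K → α) → ℝ := fun ω => ∏ k, p (ω k) with hwdef
  have hwnn : ∀ ω, 0 ≤ w ω := fun ω => Finset.prod_nonneg fun k _ => hp0 _
  set E := Finset.univ.filter (fun ω : Fin K → α =>
      η < (1 / 2 : ℝ) * ∑ a : α,
        |((Finset.univ.filter fun k : Fin K => ω k = a).card : ℝ) / K - p a|) with hEdef
  -- key pigeonhole
  have key : ∀ ω ∈ E, ∃ a : α,
      (K : ℝ) * (p a + t) ≤ ∑ k, X a (ω k) ∨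
      (K : ℝ) * ((1 - p a) + t) ≤ ∑ k, Y a (ω k) := by
    intro ω hω
    rw [hEdef, Finset.mem_filter] at hω
    by_contra hcon
    push_neg at hcon
    have hlt : ∀ a : α,
        |((Finset.univ.filter fun k : Fin K => ω k = a).card : ℝ) / K - p a| < t := by
      intro a
      obtain ⟨h1, h2⟩ := hcon a
      rw [hcX ω a] at h1
      rw [hcY ω a] at h2
      set c : ℝ := ((Finset.univ.filter fun k : Fin K => ω k = a).card : ℝ)
      rw [abs_lt]
      constructor
      · have h3 : (p a - t) < c / K := by
          rw [lt_div_iff₀ hKR]; nlinarith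
        linarith
      · have h3 : c / K < p a + t := by
          rw [div_lt_iff₀ hKR]; nlinarith
        linarith
    have hsum : ∑ a : α, |((Finset.univ.filter fun k : Fin K => ω k = a).card : ℝ) / K - p a|
        < ∑ _a : α, t :=
      Finset.sum_lt_sum_of_nonempty Finset.univ_nonempty fun a _ => hlt a
    rw [Finset.sum_const, Finset.card_univ, hn, nsmul_eq_mul] at hsum
    have : (n : ℝ) * t = 2 * η := by
      rw [htdef]; field_simp
    rw [this] at hsum
    have := hω.2
    linarith
  -- union bound
  have hstep : ∑ ω ∈ E, w ω ≤ ∑ a : α,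
      ((∑ ω ∈ Finset.univ.filter (fun ω : Fin K → α =>
          (K : ℝ) * (p a + t) ≤ ∑ k, X a (ω k)), w ω) +
       (∑ ω ∈ Finset.univ.filter (fun ω : Fin K → α =>
          (K : ℝ) * ((1 - p a) + t) ≤ ∑ k, Y a (ω k)), w ω)) := by
    have h1 : ∑ ω ∈ E, w ω ≤ ∑ ω ∈ E, ∑ a : α,
        ((if (K : ℝ) * (p a + t) ≤ ∑ k, X a (ω k) then w ω else 0) +
         (if (K : ℝ) * ((1 - p a) + t) ≤ ∑ k, Y a (ω k) then w ω else 0)) := by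
      apply Finset.sum_le_sum
      intro ω hω
      obtain ⟨a, ha⟩ := key ω hω
      have hterm : w ω ≤
          (if (K : ℝ) * (p a + t) ≤ ∑ k, X a (ω k) then w ω else 0) +
          (if (K : ℝ) * ((1 - p a) + t) ≤ ∑ k, Y a (ω k) then w ω else 0) := by
        rcases ha with h | h
        · rw [if_pos h]
          have : (0:ℝ) ≤ (if (K : ℝ) * ((1 - p a) + t) ≤ ∑ k, Y a (ω k) then w ω else 0) := by
            split_ifs with h'
            exacts [hwnn ω, le_rfl]
          linarith
        · rw [if_pos h]
          have : (0:ℝ) ≤ (if (K : ℝ) * (p a + t) ≤ ∑ k, X a (ω k) then w ω else 0) := by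
            split_ifs with h'
            exacts [hwnn ω, le_rfl]
          linarith
      refine hterm.trans (Finset.single_le_sum
        (f := fun b => (if (K : ℝ) * (p b + t) ≤ ∑ k, X b (ω k) then w ω else 0) +
          (if (K : ℝ) * ((1 - p b) + t) ≤ ∑ k, Y b (ω k) then w ω else 0))
        (fun b _ => ?_) (Finset.mem_univ a))
      apply add_nonneg <;> · split_ifs with h'; exacts [hwnn ω, le_rfl]
    rw [Finset.sum_comm] at h1
    refine h1.trans (Finset.sum_le_sum fun a _ => ?_)
    rw [Finset.sum_add_distrib]
    apply add_le_add
    · rw [← Finset.sum_filter]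
      apply Finset.sum_le_sum_of_subset_of_nonneg
        (Finset.filter_subset_filter _ (Finset.subset_univ E))
      intro ω hω _
      exact hwnn ω
    · rw [← Finset.sum_filter]
      apply Finset.sum_le_sum_of_subset_of_nonneg
        (Finset.filter_subset_filter _ (Finset.subset_univ E))
      intro ω hω _
      exact hwnn ω
  have hbound : ∀ a : α,
      (∑ ω ∈ Finset.univ.filter (fun ω : Fin K → α =>
          (K : ℝ) * (p a + t) ≤ ∑ k, X a (ω k)), w ω) +
      (∑ ω ∈ Finset.univ.filter (fun ω : Fin K → α =>
          (K : ℝ) * ((1 - p a) + t) ≤ ∑ k, Y a (ω k)), w ω)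
      ≤ 2 * Real.exp (-2 * K * t ^ 2) := by
    intro a
    have hA := chernoff p (X a) hp0 hp1 (hX01 a) K t ht
    have hB := chernoff p (Y a) hp0 hp1 (hY01 a) K t ht
    rw [hqX a] at hA
    rw [hqY a] at hB
    have := add_le_add hA hB
    linarith
  have hexp : Real.exp (-2 * K * t ^ 2) = Real.exp (-(8 * η ^ 2 * K) / n ^ 2) := by
    congr 1
    rw [htdef]
    field_simp
    ring
  calc ∑ ω ∈ E, w ω ≤ ∑ a : α, 2 * Real.exp (-2 * K * t ^ 2) :=
        hstep.trans (Finset.sum_le_sum fun a _ => hbound a)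
    _ = 2 * n * Real.exp (-(8 * η ^ 2 * K) / n ^ 2) := by
        rw [Finset.sum_const, Finset.card_univ, hn, nsmul_eq_mul, hexp]
        ring
end

section
/- The classical value of the Magic Square game is 17/18: for every pair of functions f : Fin 6 → (ZMod 2)³ and g : Fin 3 × Fin 3 → ZMod 2, the number of pairs (x, k) ∈ Fin 6 × Fin 3 for which the outputs a = f x and b = g (y(x,k)) satisfy the winning condition is at most 17, and there exist f, g achieving exactly 17 of the 18 pairs. -/
open Finset

/-- The `k`-th cell of the line denoted by `x ∈ Fin 6`: for `x < 3`, row `x`;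
for `x ≥ 3`, column `x - 3`. -/
def msCell (x : Fin 6) (k : Fin 3) : Fin 3 × Fin 3 :=
  if h : (x : ℕ) < 3 then (⟨x, h⟩, k)
  else (k, ⟨(x : ℕ) - 3, by have := x.isLt; omega⟩)

/-- The winning condition of the Magic Square game on Alice's input `x`,
position `k` of Bob's cell within the line `x`, Alice's assignment `a` to the
line, and Bob's bit `b`. -/
abbrev msWin (x : Fin 6) (k : Fin 3) (a : Fin 3 → ZMod 2) (b : ZMod 2) : Prop :=
  (a 0 + a 1 + a 2 = if (x : ℕ) < 3 then 0 else 1) ∧ a k = b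

lemma ms_parity (a b c d e f' g' h' i' : ZMod 2)
    (h1 : a + b + c = 0) (h2 : d + e + f' = 0) (h3 : g' + h' + i' = 0)
    (h4 : a + d + g' = 1) (h5 : b + e + h' = 1) (h6 : c + f' + i' = 1) : False := by
  have : ∀ a b c d e f' g' h' i' : ZMod 2,
      ¬(a + b + c = 0 ∧ d + e + f' = 0 ∧ g' + h' + i' = 0 ∧
        a + d + g' = 1 ∧ b + e + h' = 1 ∧ c + f' + i' = 1) := by decide
  exact this a b c d e f' g' h' i' ⟨h1, h2, h3, h4, h5, h6⟩

/-- The classical value of the Magic Square game is 17/18: every deterministic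
strategy `(f, g)` wins on at most 17 of the 18 equally likely pairs `(x, k)`,
and some strategy wins on exactly 17 of them. -/
theorem magic_square_classical_value :
    (∀ (f : Fin 6 → Fin 3 → ZMod 2) (g : Fin 3 × Fin 3 → ZMod 2),
      (Finset.univ.filter fun xk : Fin 6 × Fin 3 =>
          msWin xk.1 xk.2 (f xk.1) (g (msCell xk.1 xk.2))).card ≤ 17) ∧
    (∃ (f : Fin 6 → Fin 3 → ZMod 2) (g : Fin 3 × Fin 3 → ZMod 2),
      (Finset.univ.filter fun xk : Fin 6 × Fin 3 =>
          msWin xk.1 xk.2 (f xk.1) (g (msCell xk.1 xk.2))).card = 17) := by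
  constructor
  · intro f g
    by_contra h
    push_neg at h
    have hle : (Finset.univ.filter fun xk : Fin 6 × Fin 3 =>
        msWin xk.1 xk.2 (f xk.1) (g (msCell xk.1 xk.2))).card ≤ 18 := by
      have := Finset.card_filter_le (Finset.univ : Finset (Fin 6 × Fin 3))
        (fun xk => msWin xk.1 xk.2 (f xk.1) (g (msCell xk.1 xk.2)))
      simpa using this
    have hcard : (Finset.univ.filter fun xk : Fin 6 × Fin 3 =>
        msWin xk.1 xk.2 (f xk.1) (g (msCell xk.1 xk.2))).card = 18 := by omega
    have heq : (Finset.univ.filter fun xk : Fin 6 × Fin 3 =>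
        msWin xk.1 xk.2 (f xk.1) (g (msCell xk.1 xk.2))) = Finset.univ := by
      apply Finset.eq_univ_of_card
      rw [hcard]; simp
    have hall : ∀ x k, msWin x k (f x) (g (msCell x k)) := by
      intro x k
      have : (x, k) ∈ (Finset.univ.filter fun xk : Fin 6 × Fin 3 =>
          msWin xk.1 xk.2 (f xk.1) (g (msCell xk.1 xk.2))) := by
        rw [heq]; exact Finset.mem_univ _
      exact (Finset.mem_filter.mp this).2
    have hg0 : g (msCell 0 0) + g (msCell 0 1) + g (msCell 0 2) = 0 := by
      rw [← (hall 0 0).2, ← (hall 0 1).2, ← (hall 0 2).2]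
      simpa using (hall 0 0).1
    have hg1 : g (msCell 1 0) + g (msCell 1 1) + g (msCell 1 2) = 0 := by
      rw [← (hall 1 0).2, ← (hall 1 1).2, ← (hall 1 2).2]
      simpa using (hall 1 0).1
    have hg2 : g (msCell 2 0) + g (msCell 2 1) + g (msCell 2 2) = 0 := by
      rw [← (hall 2 0).2, ← (hall 2 1).2, ← (hall 2 2).2]
      simpa using (hall 2 0).1
    have hc0 : g (msCell 3 0) + g (msCell 3 1) + g (msCell 3 2) = 1 := by
      rw [← (hall 3 0).2, ← (hall 3 1).2, ← (hall 3 2).2]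
      simpa using (hall 3 0).1
    have hc1 : g (msCell 4 0) + g (msCell 4 1) + g (msCell 4 2) = 1 := by
      rw [← (hall 4 0).2, ← (hall 4 1).2, ← (hall 4 2).2]
      simpa using (hall 4 0).1
    have hc2 : g (msCell 5 0) + g (msCell 5 1) + g (msCell 5 2) = 1 := by
      rw [← (hall 5 0).2, ← (hall 5 1).2, ← (hall 5 2).2]
      simpa using (hall 5 0).1
    exact ms_parity (g (0, 0)) (g (0, 1)) (g (0, 2)) (g (1, 0)) (g (1, 1))
      (g (1, 2)) (g (2, 0)) (g (2, 1)) (g (2, 2)) hg0 hg1 hg2 hc0 hc1 hc2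
  · refine ⟨fun x k =>
      if (x : ℕ) = 2 then (if (k : ℕ) < 2 then 1 else 0)
      else if (x : ℕ) < 3 then 0
      else (if (k : ℕ) = 2 then 1 else 0),
      fun p => if (p.1 : ℕ) = 2 ∧ (p.2 : ℕ) < 2 then 1 else 0, ?_⟩
    decide
end

section
/- Any non-signaling strategy that wins the CHSH game with probability strictly greater than 3/4 must generate randomness: if p is a non-signaling strategy for the CHSH game with winning probability > 3/4, then there exist inputs x, y ∈ Bool and outputs a, b ∈ Bool such that 0 < p x y a b < 1. -/
set_option maxRecDepth 100000
set_option synthInstance.maxSize 2000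
set_option synthInstance.maxHeartbeats 1000000
set_option maxHeartbeats 4000000

open Finset

def cnt (b : Bool) : ℕ := if b then 1 else 0

theorem chsh_aux : ∀ f00 f01 f02 f03 f10 f11 f12 f13 f20 f21 f22 f23 f30 f31 f32 f33 : Bool,
  (cnt f00 + cnt f01 + cnt f02 + cnt f03 = 1) →
  (cnt f10 + cnt f11 + cnt f12 + cnt f13 = 1) →
  (cnt f20 + cnt f21 + cnt f22 + cnt f23 = 1) →
  (cnt f30 + cnt f31 + cnt f32 + cnt f33 = 1) →
  (cnt f00 + cnt f01 = cnt f10 + cnt f11) →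
  (cnt f02 + cnt f03 = cnt f12 + cnt f13) →
  (cnt f20 + cnt f21 = cnt f30 + cnt f31) →
  (cnt f22 + cnt f23 = cnt f32 + cnt f33) →
  (cnt f00 + cnt f02 = cnt f20 + cnt f22) →
  (cnt f01 + cnt f03 = cnt f21 + cnt f23) →
  (cnt f10 + cnt f12 = cnt f30 + cnt f32) →
  (cnt f11 + cnt f13 = cnt f31 + cnt f33) →
  ¬ (3 < cnt f00 + cnt f03 + cnt f10 + cnt f13 + cnt f20 + cnt f23 + cnt f31 + cnt f32) := by
  decide

/-- Any non-signaling strategy winning the CHSH game with probability strictly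
greater than the classical value 3/4 must generate randomness: some output pair
on some input pair has probability strictly between 0 and 1. -/
theorem chsh_above_classical_generates_randomness
    (p : Bool → Bool → Bool → Bool → ℝ)
    (hpos : ∀ x y a b, 0 ≤ p x y a b)
    (hsum : ∀ x y, ∑ a : Bool, ∑ b : Bool, p x y a b = 1)
    (hnsA : ∀ x a y y', ∑ b : Bool, p x y a b = ∑ b : Bool, p x y' a b)
    (hnsB : ∀ y b x x', ∑ a : Bool, p x y a b = ∑ a : Bool, p x' y a b)
    (hwin : (3 / 4 : ℝ) < (1 / 4 : ℝ) * ∑ x : Bool, ∑ y : Bool, ∑ a : Bool, ∑ b : Bool,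
      (if xor a b = (x && y) then p x y a b else 0)) :
    ∃ x y a b, 0 < p x y a b ∧ p x y a b < 1 := by
  classical
  by_contra hcon
  push_neg at hcon
  have hle1 : ∀ x y a b, p x y a b ≤ 1 := by
    intro x y a b
    calc p x y a b ≤ ∑ b' : Bool, p x y a b' :=
          Finset.single_le_sum (fun b' _ => hpos x y a b') (mem_univ b)
      _ ≤ ∑ a' : Bool, ∑ b' : Bool, p x y a' b' :=
          Finset.single_le_sum
            (fun a' _ => Finset.sum_nonneg fun b' _ => hpos x y a' b') (mem_univ a)
      _ = 1 := hsum x y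
  have h01 : ∀ x y a b, p x y a b = 0 ∨ p x y a b = 1 := by
    intro x y a b
    rcases eq_or_lt_of_le (hpos x y a b) with h | h
    · exact Or.inl h.symm
    · exact Or.inr (le_antisymm (hle1 x y a b) (hcon x y a b h))
  set f : Bool → Bool → Bool → Bool → Bool := fun x y a b => decide (p x y a b = 1) with hf
  have hpf : ∀ x y a b, p x y a b = (cnt (f x y a b) : ℝ) := by
    intro x y a b
    rcases h01 x y a b with h | h
    · simp [hf, cnt, h]
    · simp [hf, cnt, h]
  have hsum' : ∀ x y, cnt (f x y false false) + cnt (f x y false true)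
      + cnt (f x y true false) + cnt (f x y true true) = 1 := by
    intro x y
    have e := hsum x y
    simp only [Fintype.sum_bool, hpf] at e
    have : ((cnt (f x y false false) + cnt (f x y false true)
        + cnt (f x y true false) + cnt (f x y true true) : ℕ) : ℝ) = 1 := by
      push_cast; linarith
    exact_mod_cast this
  have hA : ∀ x a y y', cnt (f x y a false) + cnt (f x y a true)
      = cnt (f x y' a false) + cnt (f x y' a true) := by
    intro x a y y'
    have e := hnsA x a y y'
    simp only [Fintype.sum_bool, hpf] at e
    have : ((cnt (f x y a false) + cnt (f x y a true) : ℕ) : ℝ)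
        = ((cnt (f x y' a false) + cnt (f x y' a true) : ℕ) : ℝ) := by
      push_cast; linarith
    exact_mod_cast this
  have hB : ∀ y b x x', cnt (f x y false b) + cnt (f x y true b)
      = cnt (f x' y false b) + cnt (f x' y true b) := by
    intro y b x x'
    have e := hnsB y b x x'
    simp only [Fintype.sum_bool, hpf] at e
    have : ((cnt (f x y false b) + cnt (f x y true b) : ℕ) : ℝ)
        = ((cnt (f x' y false b) + cnt (f x' y true b) : ℕ) : ℝ) := by
      push_cast; linarith
    exact_mod_cast this
  have hW : 3 < cnt (f false false false false) + cnt (f false false true true)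
        + cnt (f false true false false) + cnt (f false true true true)
        + cnt (f true false false false) + cnt (f true false true true)
        + cnt (f true true false true) + cnt (f true true true false) := by
    simp only [Fintype.sum_bool, hpf] at hwin
    norm_num at hwin
    have : (3 : ℝ) < ((cnt (f false false false false) + cnt (f false false true true)
        + cnt (f false true false false) + cnt (f false true true true)
        + cnt (f true false false false) + cnt (f true false true true)
        + cnt (f true true false true) + cnt (f true true true false) : ℕ) : ℝ) := by
      push_cast; linarith
    exact_mod_cast this
  exact chsh_aux _ _ _ _ _ _ _ _ _ _ _ _ _ _ _ _
    (hsum' false false) (hsum' false true) (hsum' true false) (hsum' true true)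
    (hA false false false true) (hA false true false true)
    (hA true false false true) (hA true true false true)
    (hB false false false true) (hB false true false true)
    (hB true false false true) (hB true true false true) hW
end
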